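/- Let φ be a CNF formula over a variable type V and let θ : V → Bool be a subset-minimal satisfying assignment of φ, i.e., θ satisfies φ and no assignment θ'' with {x : θ'' x = true} ⊊ {x : θ x = true} satisfies φ; assume the set {x : θ x = true} is finite of cardinality m. Then there is a sequence of assignments θ₀, θ₁, …, θ_m with θ₀ the all-false assignment and θ_m = θ, such that for each i < m the assignment θ_{i+1} agrees with θ_i except for setting exactly one additional variable x to true, where x occurs as the positive literal (x, true) in some clause of φ that is not satisfied by θ_i. (This establishes that the branching algorithm which flips variables of unsatisfied clauses to true generates every minimal satisfying assignment, the key to Min-MinOnes-SAT(Γ) ∈ Total-FPT.) -/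

import Mathlib

/-- Every subset-minimal satisfying assignment `θ` of a CNF `φ`, whose set of true variables
is finite of cardinality `m`, is reached from the all-false assignment by `m` steps, each
setting to true one additional variable that occurs positively in a clause of `φ` not yet
satisfied. -/
theorem stmt_8 {V : Type*} [DecidableEq V] (φ : Finset (Finset (V × Bool))) (θ : V → Bool) (m : ℕ)
    (hsat : ∀ C ∈ φ, ∃ l ∈ C, θ l.1 = l.2)
    (hmin : ∀ θ'' : V → Bool, {x : V | θ'' x = true} ⊂ {x : V | θ x = true} →
      ¬ ∀ C ∈ φ, ∃ l ∈ C, θ'' l.1 = l.2)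
    (hfin : {x : V | θ x = true}.Finite) (hcard : hfin.toFinset.card = m) :
    ∃ seq : ℕ → (V → Bool), seq 0 = (fun _ => false) ∧ seq m = θ ∧
      ∀ i < m, ∃ x : V, seq i x = false ∧
        seq (i + 1) = Function.update (seq i) x true ∧
        ∃ C ∈ φ, (¬ ∃ l ∈ C, seq i l.1 = l.2) ∧ (x, true) ∈ C := by
  classical
  set T := hfin.toFinset with hT
  have hmemT : ∀ x, x ∈ T ↔ θ x = true := by intro x; simp [hT]
  -- key step existence
  have key : ∀ f : V → Bool, (∀ x, f x = true → θ x = true) →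
      (∃ y, θ y = true ∧ f y = false) →
      ∃ x, f x = false ∧ θ x = true ∧
        ∃ C ∈ φ, (¬ ∃ l ∈ C, f l.1 = l.2) ∧ (x, true) ∈ C := by
    intro f hsub hy
    obtain ⟨y, hy1, hy2⟩ := hy
    have hssub : {x | f x = true} ⊂ {x | θ x = true} := by
      refine ⟨fun x hx => hsub x hx, fun h => ?_⟩
      have := h (Set.mem_setOf.mpr hy1)
      simp only [Set.mem_setOf_eq, hy2] at this
      exact Bool.false_ne_true this
    have hns := hmin f hssub
    push_neg at hns
    obtain ⟨C, hC, hCuns⟩ := hns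
    obtain ⟨l, hl, hlθ⟩ := hsat C hC
    have hb : l.2 = true := by
      by_contra hb
      have hb' : l.2 = false := by cases h : l.2 <;> simp_all
      rw [hb'] at hlθ
      have hf : f l.1 = false := by
        cases hfl : f l.1
        · rfl
        · exact absurd (hsub _ hfl) (by simp [hlθ])
      exact hCuns l hl (by rw [hf, hb'])
    have hfl : f l.1 = false := by
      cases hfl : f l.1
      · rfl
      · exact absurd (hCuns l hl) (by rw [hfl, hb]; simp)
    refine ⟨l.1, hfl, by rw [← hb]; exact hlθ, C, hC, ?_, by rw [← hb]; exact hl⟩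
    rintro ⟨l', hl', hl'f⟩
    exact hCuns l' hl' hl'f
  -- the step function
  set P : (V → Bool) → Prop := fun f =>
    ∃ x, f x = false ∧ θ x = true ∧
      ∃ C ∈ φ, (¬ ∃ l ∈ C, f l.1 = l.2) ∧ (x, true) ∈ C with hP
  set step : (V → Bool) → V → Bool := fun f =>
    if h : P f then Function.update f (Classical.choose h) true else f with hstep
  set seq : ℕ → V → Bool := fun n => step^[n] (fun _ => false) with hseq
  have hseq0 : seq 0 = fun _ => false := rfl
  have hseqS : ∀ i, seq (i + 1) = step (seq i) := by
    intro i; simp [hseq, Function.iterate_succ_apply']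
  -- invariant
  have inv : ∀ i, i ≤ m →
      (∀ x, seq i x = true → θ x = true) ∧
      (T.filter (fun x => seq i x = true)).card = i := by
    intro i
    induction i with
    | zero =>
      intro _
      constructor
      · intro x hx; simp [hseq0] at hx
      · rw [Finset.card_eq_zero, Finset.filter_eq_empty_iff]
        intro x _; simp [hseq0]
    | succ i ih =>
      intro hi
      obtain ⟨hsub, hcardi⟩ := ih (Nat.le_of_succ_le hi)
      have hlt : (T.filter (fun x => seq i x = true)).card < T.card := by
        rw [hcardi, hcard]; exact hi
      obtain ⟨y, hyT, hynot⟩ : ∃ y ∈ T, y ∉ T.filter (fun x => seq i x = true) := by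
        by_contra h
        push_neg at h
        exact absurd (Finset.card_le_card fun z hz => h z hz) (by omega)
      have hy1 : θ y = true := (hmemT y).mp hyT
      have hy2 : seq i y = false := by
        rcases h : seq i y with _ | _
        · rfl
        · exact absurd (Finset.mem_filter.mpr ⟨hyT, h⟩) hynot
      have hPi : P (seq i) := key (seq i) hsub ⟨y, hy1, hy2⟩
      set x := Classical.choose hPi with hx
      obtain ⟨hxf, hxθ, _⟩ := Classical.choose_spec hPi
      have hstepeq : seq (i + 1) = Function.update (seq i) x true := by
        rw [hseqS, hstep]; simp only [dif_pos hPi, hx]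
      constructor
      · intro z hz
        rw [hstepeq] at hz
        by_cases hzx : z = x
        · rw [hzx]; exact hxθ
        · rw [Function.update_of_ne hzx] at hz; exact hsub z hz
      · have hfilt : T.filter (fun z => seq (i+1) z = true)
            = insert x (T.filter (fun z => seq i z = true)) := by
          ext z
          simp only [Finset.mem_filter, Finset.mem_insert, hstepeq]
          by_cases hzx : z = x
          · subst hzx
            simp only [Function.update_self]
            exact ⟨fun _ => Or.inl trivial, fun _ => ⟨(hmemT _).mpr hxθ, trivial⟩⟩
          · simp only [Function.update_of_ne hzx, hzx, false_or]
        rw [hfilt, Finset.card_insert_of_notMem, hcardi]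
        intro hmem
        rw [Finset.mem_filter] at hmem
        rw [hxf] at hmem
        exact Bool.false_ne_true hmem.2
  -- seq m = θ
  obtain ⟨hsubm, hcardm⟩ := inv m le_rfl
  have hfeq : T.filter (fun x => seq m x = true) = T := by
    apply Finset.eq_of_subset_of_card_le (Finset.filter_subset _ _)
    rw [hcardm, hcard]
  have hseqm : seq m = θ := by
    funext z
    rcases h : θ z with _ | _
    · rcases h' : seq m z with _ | _
      · rfl
      · exact absurd (hsubm z h') (by simp [h])
    · have hz : z ∈ T := (hmemT z).mpr h
      rw [← hfeq] at hz
      exact (Finset.mem_filter.mp hz).2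
  refine ⟨seq, hseq0, hseqm, fun i hi => ?_⟩
  obtain ⟨hsub, hcardi⟩ := inv i (Nat.le_of_lt hi)
  have hlt : (T.filter (fun x => seq i x = true)).card < T.card := by
    rw [hcardi, hcard]; exact hi
  obtain ⟨y, hyT, hynot⟩ : ∃ y ∈ T, y ∉ T.filter (fun x => seq i x = true) := by
    by_contra h
    push_neg at h
    exact absurd (Finset.card_le_card fun z hz => h z hz) (by omega)
  have hy2 : seq i y = false := by
    rcases h : seq i y with _ | _
    · rfl
    · exact absurd (Finset.mem_filter.mpr ⟨hyT, h⟩) hynot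
  have hPi : P (seq i) := key (seq i) hsub ⟨y, (hmemT y).mp hyT, hy2⟩
  obtain ⟨hxf, _, hC⟩ := Classical.choose_spec hPi
  exact ⟨Classical.choose hPi, hxf,
    by rw [hseqS, hstep]; simp only [dif_pos hPi], hC⟩
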